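/- If G is a 1-factorable graph and H is a regular graph, then the strong tensor product G ⊗ H is 1-factorable. -/

import Mathlib

open SimpleGraph

/-- `c` is an interval `t`-coloring of `G`: edges get colors in `{1,…,t}`, every color
`1,…,t` is used, adjacent edges get distinct colors, and the set of colors of edges
incident to any vertex is an interval of integers. -/
def IsIntervalColoring {V : Type*} (G : SimpleGraph V) (t : ℕ) (c : Sym2 V → ℕ) : Prop :=
  (∀ e ∈ G.edgeSet, 1 ≤ c e ∧ c e ≤ t) ∧
  (∀ i, 1 ≤ i → i ≤ t → ∃ e ∈ G.edgeSet, c e = i) ∧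
  (∀ v w₁ w₂, G.Adj v w₁ → G.Adj v w₂ → w₁ ≠ w₂ → c s(v, w₁) ≠ c s(v, w₂)) ∧
  (∀ v i j k, (∃ w, G.Adj v w ∧ c s(v, w) = i) → (∃ w, G.Adj v w ∧ c s(v, w) = k) →
    i ≤ j → j ≤ k → ∃ w, G.Adj v w ∧ c s(v, w) = j)

/-- `G` has an interval `t`-coloring. -/
def HasIntervalColoring {V : Type*} (G : SimpleGraph V) (t : ℕ) : Prop :=
  ∃ c : Sym2 V → ℕ, IsIntervalColoring G t c

/-- `G` is interval colorable (`G ∈ 𝔑`). -/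
def IntervalColorable {V : Type*} (G : SimpleGraph V) : Prop :=
  ∃ t : ℕ, 1 ≤ t ∧ HasIntervalColoring G t

/-- `w G`: the least number of colors in an interval coloring of `G`. -/
noncomputable def wNum {V : Type*} (G : SimpleGraph V) : ℕ :=
  sInf {t | HasIntervalColoring G t}

/-- `W G`: the greatest number of colors in an interval coloring of `G`. -/
noncomputable def WNum {V : Type*} (G : SimpleGraph V) : ℕ :=
  sSup {t | HasIntervalColoring G t}

/-- `G` is `r`-regular: every vertex has exactly `r` neighbors. -/
def IsRegularGraph {V : Type*} (G : SimpleGraph V) (r : ℕ) : Prop :=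
  ∀ v : V, (G.neighborSet v).ncard = r

/-- `c` is a proper edge coloring of `G` using colors `0,…,k-1`. -/
def IsProperEdgeColoring {V : Type*} (G : SimpleGraph V) (k : ℕ) (c : Sym2 V → ℕ) : Prop :=
  (∀ e ∈ G.edgeSet, c e < k) ∧
  (∀ v w₁ w₂, G.Adj v w₁ → G.Adj v w₂ → w₁ ≠ w₂ → c s(v, w₁) ≠ c s(v, w₂))

/-- The chromatic index `χ'(G)`. -/
noncomputable def edgeChromaticNumber {V : Type*} (G : SimpleGraph V) : ℕ :=
  sInf {k | ∃ c : Sym2 V → ℕ, IsProperEdgeColoring G k c}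

/-- `G` is 1-factorable: its edge set decomposes into perfect matchings. -/
def IsOneFactorable {V : Type*} (G : SimpleGraph V) : Prop :=
  ∃ (n : ℕ) (f : Fin n → SimpleGraph.Subgraph G),
    (∀ i, (f i).IsPerfectMatching) ∧
    (∀ e ∈ G.edgeSet, ∃! i, e ∈ (f i).edgeSet)

/-- The tensor (direct) product `G × H`. -/
def tensorProd {α β : Type*} (G : SimpleGraph α) (H : SimpleGraph β) :
    SimpleGraph (α × β) where
  Adj p q := G.Adj p.1 q.1 ∧ H.Adj p.2 q.2
  symm := .mk fun p q ⟨h₁, h₂⟩ => ⟨h₁.symm, h₂.symm⟩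
  loopless := .mk fun p h => G.loopless.irrefl p.1 h.1

/-- The strong tensor (semistrong) product `G ⊗ H`. -/
def strongTensorProd {α β : Type*} (G : SimpleGraph α) (H : SimpleGraph β) :
    SimpleGraph (α × β) where
  Adj p q := (G.Adj p.1 q.1 ∧ H.Adj p.2 q.2) ∨ (p.2 = q.2 ∧ G.Adj p.1 q.1)
  symm := .mk fun p q h => by
    rcases h with ⟨h₁, h₂⟩ | ⟨h₁, h₂⟩
    · exact Or.inl ⟨h₁.symm, h₂.symm⟩
    · exact Or.inr ⟨h₁.symm, h₂.symm⟩
  loopless := .mk fun p h => by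
    rcases h with ⟨h₁, _⟩ | ⟨_, h₁⟩ <;> exact G.loopless.irrefl p.1 h₁

/-- The strong product `G ⊠ H`. -/
def strongProd {α β : Type*} (G : SimpleGraph α) (H : SimpleGraph β) :
    SimpleGraph (α × β) where
  Adj p q := (G.Adj p.1 q.1 ∧ H.Adj p.2 q.2) ∨ (p.1 = q.1 ∧ H.Adj p.2 q.2) ∨
    (p.2 = q.2 ∧ G.Adj p.1 q.1)
  symm := .mk fun p q h => by
    rcases h with ⟨h₁, h₂⟩ | ⟨h₁, h₂⟩ | ⟨h₁, h₂⟩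
    · exact Or.inl ⟨h₁.symm, h₂.symm⟩
    · exact Or.inr (Or.inl ⟨h₁.symm, h₂.symm⟩)
    · exact Or.inr (Or.inr ⟨h₁.symm, h₂.symm⟩)
  loopless := .mk fun p h => by
    rcases h with ⟨h₁, _⟩ | ⟨_, h₂⟩ | ⟨_, h₁⟩
    · exact G.loopless.irrefl p.1 h₁
    · exact H.loopless.irrefl p.2 h₂
    · exact G.loopless.irrefl p.1 h₁

/-- The lexicographic product (composition) `G[H]`. -/
def lexProd {α β : Type*} (G : SimpleGraph α) (H : SimpleGraph β) :
    SimpleGraph (α × β) where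
  Adj p q := G.Adj p.1 q.1 ∨ (p.1 = q.1 ∧ H.Adj p.2 q.2)
  symm := .mk fun p q h => by
    rcases h with h₁ | ⟨h₁, h₂⟩
    · exact Or.inl h₁.symm
    · exact Or.inr ⟨h₁.symm, h₂.symm⟩
  loopless := .mk fun p h => by
    rcases h with h₁ | ⟨_, h₂⟩
    · exact G.loopless.irrefl p.1 h₁
    · exact H.loopless.irrefl p.2 h₂


lemma regular_rel_decomp {β : Type*} [Fintype β] :
    ∀ (k : ℕ) (R : β → β → Prop),
    (∀ v, {w | R v w}.ncard = k) → (∀ w, {v | R v w}.ncard = k) →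
    ∃ σ : Fin k → β ≃ β, (∀ j v, R v (σ j v)) ∧ ∀ v w, R v w → ∃! j, (σ j) v = w := by
  intro k
  induction k with
  | zero =>
    intro R hl _
    refine ⟨Fin.elim0, fun j => j.elim0, fun v w hvw => ?_⟩
    have h0 : {w | R v w} = ∅ := (Set.ncard_eq_zero (Set.toFinite _)).mp (hl v)
    exact absurd (h0 ▸ hvw : w ∈ (∅ : Set β)) (Set.notMem_empty w)
  | succ k ih =>
    intro R hl hr
    classical
    set t : β → Finset β := fun v => {w | R v w}.toFinset with ht
    have hcard : ∀ v, (t v).card = k + 1 := fun v => by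
      rw [ht]; rw [← Set.ncard_eq_toFinset_card']; exact hl v
    have hmem : ∀ v w, w ∈ t v ↔ R v w := fun v w => by simp [ht]
    have hall : ∀ s : Finset β, s.card ≤ (s.biUnion t).card := by
      intro s
      set T := s.biUnion t with hT
      have key : (k+1) * s.card ≤ (k+1) * T.card := by
        calc (k+1) * s.card = ∑ v ∈ s, (t v).card := by
              rw [Finset.sum_congr rfl fun v _ => hcard v, Finset.sum_const, smul_eq_mul,
                mul_comm]
          _ = ∑ v ∈ s, ∑ w ∈ T, (if w ∈ t v then 1 else 0) := by
              refine Finset.sum_congr rfl fun v hv => ?_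
              rw [Finset.sum_ite_mem,
                Finset.inter_eq_right.mpr (Finset.subset_biUnion_of_mem t hv),
                Finset.sum_const, smul_eq_mul, mul_one]
          _ = ∑ w ∈ T, ∑ v ∈ s, (if w ∈ t v then 1 else 0) := Finset.sum_comm
          _ ≤ ∑ w ∈ T, (k+1) := by
              refine Finset.sum_le_sum fun w _ => ?_
              calc ∑ v ∈ s, (if w ∈ t v then 1 else 0)
                  ≤ ∑ v ∈ Finset.univ, (if w ∈ t v then 1 else 0) :=
                    Finset.sum_le_sum_of_subset s.subset_univ
                _ = (Finset.univ.filter fun v => w ∈ t v).card := (Finset.card_filter _ _).symm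
                _ = {v | R v w}.toFinset.card := by
                    congr 1; ext v; simp [hmem]
                _ = k + 1 := by rw [← Set.ncard_eq_toFinset_card']; exact hr w
          _ = (k+1) * T.card := by rw [Finset.sum_const, smul_eq_mul, mul_comm]
      exact Nat.le_of_mul_le_mul_left key (Nat.succ_pos k)
    obtain ⟨g, hginj, hgmem⟩ := (Finset.all_card_le_biUnion_card_iff_exists_injective t).mp hall
    have hgR : ∀ v, R v (g v) := fun v => (hmem v (g v)).mp (hgmem v)
    let gE : β ≃ β := Equiv.ofBijective g (Finite.injective_iff_bijective.mp hginj)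
    set R' : β → β → Prop := fun v w => R v w ∧ w ≠ g v with hR'
    have hl' : ∀ v, {w | R' v w}.ncard = k := by
      intro v
      have hset : {w | R' v w} = {w | R v w} \ {g v} := by
        ext w; simp [hR', and_comm]
      rw [hset, Set.ncard_diff_singleton_of_mem
        (show g v ∈ {w | R v w} from hgR v), hl v]
      omega
    have hr' : ∀ w, {v | R' v w}.ncard = k := by
      intro w
      have hset : {v | R' v w} = {v | R v w} \ {gE.symm w} := by
        ext v
        simp only [hR', Set.mem_setOf_eq, Set.mem_diff, Set.mem_singleton_iff]
        constructor
        · rintro ⟨h1, h2⟩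
          refine ⟨h1, fun hv => h2 ?_⟩
          subst hv
          exact (gE.apply_symm_apply w).symm
        · rintro ⟨h1, h2⟩
          refine ⟨h1, fun hw => h2 ?_⟩
          subst hw
          exact (gE.symm_apply_apply v).symm
      have hmem' : gE.symm w ∈ {v | R v w} := by
        have h2 : R (gE.symm w) (gE (gE.symm w)) := hgR _
        rw [gE.apply_symm_apply] at h2
        exact h2
      rw [hset, Set.ncard_diff_singleton_of_mem hmem', hr w]
      omega
    obtain ⟨σ', hσ'1, hσ'2⟩ := ih R' hl' hr'
    refine ⟨Fin.cons gE σ', ?_, ?_⟩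
    · intro j v
      refine Fin.cases ?_ ?_ j
      · exact hgR v
      · intro i; exact (hσ'1 i v).1
    · intro v w hvw
      by_cases hw : w = g v
      · refine ⟨0, hw.symm, fun j hj => ?_⟩
        rcases Fin.eq_zero_or_eq_succ j with h0 | ⟨i, rfl⟩
        · exact h0
        · simp only [Fin.cons_succ] at hj
          exact absurd (hw ▸ hj) (hσ'1 i v).2
      · obtain ⟨i, hi, hiu⟩ := hσ'2 v w ⟨hvw, hw⟩
        refine ⟨i.succ, ?_, fun j hj => ?_⟩
        · simp only [Fin.cons_succ]; exact hi
        rcases Fin.eq_zero_or_eq_succ j with rfl | ⟨i', rfl⟩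
        · simp only [Fin.cons_zero] at hj
          exact absurd hj.symm hw
        · simp only [Fin.cons_succ] at hj
          rw [hiu i' hj]

/-- If `G` is 1-factorable and `H` is regular, then `G ⊗ H` is 1-factorable. -/
theorem strongTensorProd_oneFactorable {α β : Type*} [Fintype α] [Fintype β]
    (G : SimpleGraph α) (H : SimpleGraph β) (r : ℕ)
    (hG : IsOneFactorable G) (hH : IsRegularGraph H r) :
    IsOneFactorable (strongTensorProd G H) := by
  classical
  obtain ⟨n, f, hpm, hcov⟩ := hG
  set R : β → β → Prop := fun v w => v = w ∨ H.Adj v w with hRdef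
  have hRsymm : ∀ v w, R v w → R w v := by
    rintro v w (rfl | h)
    · exact Or.inl rfl
    · exact Or.inr h.symm
  have hl : ∀ v, {w | R v w}.ncard = r + 1 := by
    intro v
    have hset : {w | R v w} = insert v (H.neighborSet v) := by
      ext w
      simp [hRdef, SimpleGraph.mem_neighborSet, eq_comm]
    rw [hset, Set.ncard_insert_of_notMem (by simp) (Set.toFinite _), hH v]
  have hr2 : ∀ w, {v | R v w}.ncard = r + 1 := by
    intro w
    have hset : {v | R v w} = {v | R w v} := by
      ext v
      exact ⟨fun h => hRsymm _ _ h, fun h => hRsymm _ _ h⟩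
    rw [hset]
    exact hl w
  obtain ⟨σ, hσ1, hσ2⟩ := regular_rel_decomp (r + 1) R hl hr2
  let ord : α ≃ Fin (Fintype.card α) := Fintype.equivFin α
  let M : Fin n → Fin (r + 1) → (strongTensorProd G H).Subgraph := fun i j =>
    { verts := Set.univ
      Adj := fun p q => (f i).Adj p.1 q.1 ∧
        ((ord p.1 < ord q.1 ∧ q.2 = σ j p.2) ∨ (ord q.1 < ord p.1 ∧ p.2 = σ j q.2))
      adj_sub := by
        rintro ⟨u, v⟩ ⟨u', v'⟩ ⟨hadj, h⟩
        have hGA : G.Adj u u' := (f i).adj_sub hadj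
        rcases h with ⟨_, hv⟩ | ⟨_, hv⟩
        · rcases hσ1 j v with heq | hHA
          · exact Or.inr ⟨by rw [hv, ← heq], hGA⟩
          · exact Or.inl ⟨hGA, by rw [hv]; exact hHA⟩
        · rcases hσ1 j v' with heq | hHA
          · exact Or.inr ⟨by rw [hv, ← heq], hGA⟩
          · exact Or.inl ⟨hGA, by rw [hv]; exact hHA.symm⟩
      edge_vert := fun _ => Set.mem_univ _
      symm := by
        constructor
        rintro p q ⟨hadj, h⟩
        exact ⟨hadj.symm, h.symm⟩ }
  have hM : ∀ i j, (M i j).IsPerfectMatching := by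
    intro i j
    rw [SimpleGraph.Subgraph.isPerfectMatching_iff]
    rintro ⟨u, v⟩
    obtain ⟨u', hu', huu⟩ := SimpleGraph.Subgraph.isPerfectMatching_iff.mp (hpm i) u
    have hne : ord u ≠ ord u' := fun h => ((f i).adj_sub hu').ne (ord.injective h)
    rcases lt_or_gt_of_ne hne with hlt | hgt
    · refine ⟨(u', σ j v), ⟨hu', Or.inl ⟨hlt, rfl⟩⟩, ?_⟩
      rintro ⟨u₂, v₂⟩ ⟨hadj, h⟩
      have hu2 : u₂ = u' := huu u₂ hadj
      subst hu2
      rcases h with ⟨_, hv⟩ | ⟨hlt2, _⟩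
      · exact Prod.ext rfl hv
      · exact absurd hlt2 (lt_asymm hlt)
    · refine ⟨(u', (σ j).symm v), ⟨hu', Or.inr ⟨hgt, ((σ j).apply_symm_apply v).symm⟩⟩, ?_⟩
      rintro ⟨u₂, v₂⟩ ⟨hadj, h⟩
      have hu2 : u₂ = u' := huu u₂ hadj
      subst hu2
      rcases h with ⟨hlt2, _⟩ | ⟨_, hv⟩
      · exact absurd hlt2 (lt_asymm hgt)
      · exact Prod.ext rfl (((σ j).eq_symm_apply).mpr hv.symm)
  have hcov' : ∀ e' ∈ (strongTensorProd G H).edgeSet,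
      ∃! p : Fin n × Fin (r + 1), e' ∈ (M p.1 p.2).edgeSet := by
    intro e' he'
    revert he'
    induction e' using Sym2.ind with
    | _ pq pq' =>
      obtain ⟨u, v⟩ := pq
      obtain ⟨u', v'⟩ := pq'
      intro he'
      rw [SimpleGraph.mem_edgeSet] at he'
      have hGA : G.Adj u u' := by
        rcases he' with ⟨h, _⟩ | ⟨_, h⟩ <;> exact h
      have hRA : R v v' := by
        rcases he' with ⟨_, h⟩ | ⟨h, _⟩
        · exact Or.inr h
        · exact Or.inl h
      obtain ⟨i, hi, hiu⟩ := hcov s(u, u') (G.mem_edgeSet.mpr hGA)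
      rw [SimpleGraph.Subgraph.mem_edgeSet] at hi
      have hne : ord u ≠ ord u' := fun h => hGA.ne (ord.injective h)
      rcases lt_or_gt_of_ne hne with hlt | hgt
      · obtain ⟨j, hj, hju⟩ := hσ2 v v' hRA
        refine ⟨(i, j), ?_, ?_⟩
        · simp only [SimpleGraph.Subgraph.mem_edgeSet]
          exact ⟨hi, Or.inl ⟨hlt, hj.symm⟩⟩
        · rintro ⟨i₂, j₂⟩ hmem
          simp only [SimpleGraph.Subgraph.mem_edgeSet] at hmem
          obtain ⟨hadj2, h2⟩ := hmem
          have hii : i₂ = i := hiu i₂ (SimpleGraph.Subgraph.mem_edgeSet.mpr hadj2)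
          rcases h2 with ⟨_, hv2⟩ | ⟨hlt2, _⟩
          · have hjj : j₂ = j := hju j₂ hv2.symm
            rw [hii, hjj]
          · exact absurd hlt2 (lt_asymm hlt)
      · obtain ⟨j, hj, hju⟩ := hσ2 v' v (hRsymm _ _ hRA)
        refine ⟨(i, j), ?_, ?_⟩
        · simp only [SimpleGraph.Subgraph.mem_edgeSet]
          exact ⟨hi, Or.inr ⟨hgt, hj.symm⟩⟩
        · rintro ⟨i₂, j₂⟩ hmem
          simp only [SimpleGraph.Subgraph.mem_edgeSet] at hmem
          obtain ⟨hadj2, h2⟩ := hmem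
          have hii : i₂ = i := hiu i₂ (SimpleGraph.Subgraph.mem_edgeSet.mpr hadj2)
          rcases h2 with ⟨hlt2, _⟩ | ⟨_, hv2⟩
          · exact absurd hlt2 (lt_asymm hgt)
          · have hjj : j₂ = j := hju j₂ hv2.symm
            rw [hii, hjj]
  let E : Fin n × Fin (r + 1) ≃ Fin (n * (r + 1)) := finProdFinEquiv
  refine ⟨n * (r + 1), fun x => M (E.symm x).1 (E.symm x).2, fun x => hM _ _, ?_⟩
  intro e' he'
  obtain ⟨p, hp, hpu⟩ := hcov' e' he'
  refine ⟨E p, ?_, ?_⟩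
  · simpa using hp
  · intro x hx
    have h2 : E.symm x = p := hpu _ hx
    rw [← h2, Equiv.apply_symm_apply]
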